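/- arXiv:1501.04219 — 2 statements merged into one kernel-verified Lean document; each statement's English description precedes it below -/
import Mathlib

section
/- Let $m$ be a natural number, $\Omega \subseteq \mathbb{C}$ a connected open set, $h \le m$, and let $A_0, A_1, \dots, A_h : \Omega \to \mathbb{C}^m$ be holomorphic maps all of whose values lie in the span of $e_{h+1}, \dots, e_m$ (i.e., the first $h$ coordinates of each $A_i(y)$ vanish). Define vector fields on $\Omega \times \mathbb{C}^m$ by $v_0(y,x) = (1, A_0(y))$ and $v_i(y,x) = (0, e_i + A_i(y))$ for $i = 1, \dots, h$. If for every $i = 1, \dots, h$ and every point $p \in \Omega \times \mathbb{C}^m$ the Lie bracket $[v_0, v_i](p)$ lies in the $\mathbb{C}$-linear span of $v_0(p), v_1(p), \dots, v_h(p)$, then each $A_i$ for $i = 1, \dots, h$ is constant on $\Omega$. -/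
/-- Lie bracket of vector fields on (an open subset of) a complex normed space,
viewed as maps into the model vector space:
`[V,W](p) = DW_p(V(p)) - DV_p(W(p))`. -/
noncomputable def lieBracket {E : Type*} [NormedAddCommGroup E] [NormedSpace ℂ E]
    (V W : E → E) (p : E) : E :=
  fderiv ℂ W p (V p) - fderiv ℂ V p (W p)

/-- with `v₀(y,x) = (1, A₀(y))` and `vᵢ(y,x) = (0, eᵢ + Aᵢ(y))` on
`Ω × ℂ^m`, `Ω ⊆ ℂ` connected open, where all the holomorphic maps `A₀, …, A_h` take values
in the span of `e_{h+1}, …, e_m`: if every bracket `[v₀, vᵢ](p)` lies in the span of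
`v₀(p), v₁(p), …, v_h(p)`, then each `Aᵢ`, `i = 1, …, h`, is constant on `Ω`. -/
theorem stmt2 (m h : ℕ) (hm : h ≤ m) (Ω : Set ℂ) (hΩ : IsOpen Ω)
    (hconn : IsConnected Ω)
    (A₀ : ℂ → (Fin m → ℂ)) (A : Fin h → ℂ → (Fin m → ℂ))
    (hA₀ : DifferentiableOn ℂ A₀ Ω) (hA : ∀ i, DifferentiableOn ℂ (A i) Ω)
    (hA₀span : ∀ y, ∀ j : Fin m, (j : ℕ) < h → A₀ y j = 0)
    (hAspan : ∀ i y, ∀ j : Fin m, (j : ℕ) < h → A i y j = 0)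
    (v₀ : (ℂ × (Fin m → ℂ)) → (ℂ × (Fin m → ℂ)))
    (v : Fin h → (ℂ × (Fin m → ℂ)) → (ℂ × (Fin m → ℂ)))
    (hv₀ : ∀ p, v₀ p = (1, A₀ p.1))
    (hv : ∀ i p, v i p = (0, Pi.single (Fin.castLE hm i) 1 + A i p.1))
    (hbracket : ∀ (i : Fin h) (p : ℂ × (Fin m → ℂ)), p.1 ∈ Ω →
      lieBracket v₀ (v i) p ∈
        Submodule.span ℂ (insert (v₀ p) (Set.range fun j : Fin h => v j p))) :
    ∀ (i : Fin h), ∀ y₁ ∈ Ω, ∀ y₂ ∈ Ω, A i y₁ = A i y₂ := by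
  have key : ∀ (i : Fin h), ∀ y ∈ Ω, fderiv ℂ (A i) y = 0 := by
    intro i y hy
    set p : ℂ × (Fin m → ℂ) := (y, 0) with hpdef
    have hp1 : p.1 = y := rfl
    have hAy : DifferentiableAt ℂ (A i) y := ((hA i) y hy).differentiableAt (hΩ.mem_nhds hy)
    have hA₀y : DifferentiableAt ℂ A₀ y := (hA₀ y hy).differentiableAt (hΩ.mem_nhds hy)
    -- derivative of v i at p
    have hvi : HasFDerivAt (v i)
        ((0 : (ℂ × (Fin m → ℂ)) →L[ℂ] ℂ).prod
          (((0 : ℂ →L[ℂ] (Fin m → ℂ)) + fderiv ℂ (A i) y).comp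
            (ContinuousLinearMap.fst ℂ ℂ (Fin m → ℂ)))) p := by
      have h2 : HasFDerivAt (fun q : ℂ × (Fin m → ℂ) =>
          Pi.single (Fin.castLE hm i) (1 : ℂ) + A i q.1)
          (((0 : ℂ →L[ℂ] (Fin m → ℂ)) + fderiv ℂ (A i) y).comp
            (ContinuousLinearMap.fst ℂ ℂ (Fin m → ℂ))) p :=
        HasFDerivAt.comp (f := Prod.fst) p (HasFDerivAt.add (hasFDerivAt_const (Pi.single (Fin.castLE hm i) (1 : ℂ) : Fin m → ℂ) y) hAy.hasFDerivAt) (hasFDerivAt_fst (p := p))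
      have h3 := HasFDerivAt.prodMk (hasFDerivAt_const (0 : ℂ) p) h2
      have : v i = fun q : ℂ × (Fin m → ℂ) =>
          ((0 : ℂ), Pi.single (Fin.castLE hm i) (1 : ℂ) + A i q.1) := funext (hv i)
      rw [this]; exact h3
    have hv0 : HasFDerivAt v₀
        ((0 : (ℂ × (Fin m → ℂ)) →L[ℂ] ℂ).prod
          ((fderiv ℂ A₀ y).comp (ContinuousLinearMap.fst ℂ ℂ (Fin m → ℂ)))) p := by
      have h2 : HasFDerivAt (fun q : ℂ × (Fin m → ℂ) => A₀ q.1)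
          ((fderiv ℂ A₀ y).comp (ContinuousLinearMap.fst ℂ ℂ (Fin m → ℂ))) p :=
        hA₀y.hasFDerivAt.comp p hasFDerivAt_fst
      have h3 := HasFDerivAt.prodMk (hasFDerivAt_const (1 : ℂ) p) h2
      have : v₀ = fun q : ℂ × (Fin m → ℂ) => ((1 : ℂ), A₀ q.1) := funext hv₀
      rw [this]
      exact h3
    -- compute the bracket
    have hbr : lieBracket v₀ (v i) p = (0, fderiv ℂ (A i) y 1) := by
      unfold lieBracket
      rw [hvi.fderiv, hv0.fderiv, hv₀ p, hv i p]
      simp [Prod.ext_iff]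
    have hmem := hbracket i p hy
    rw [hbr] at hmem
    rw [Submodule.mem_span_insert] at hmem
    obtain ⟨a, z, hz, heq⟩ := hmem
    rw [Submodule.mem_span_range_iff_exists_fun] at hz
    obtain ⟨c, hc⟩ := hz
    rw [← hc] at heq
    set w : Fin m → ℂ := fderiv ℂ (A i) y 1 with hwdef
    -- the first h coordinates of w vanish
    have hwk : ∀ k : Fin m, (k : ℕ) < h → w k = 0 := by
      intro k hk
      set π := ContinuousLinearMap.proj (R := ℂ) (φ := fun _ : Fin m => ℂ) k with hπdef
      have hπ : HasFDerivAt (⇑π ∘ A i) (π.comp (fderiv ℂ (A i) y)) y :=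
        (π.hasFDerivAt (x := A i y)).comp y hAy.hasFDerivAt
      have hev : (fun _ => (0 : ℂ)) =ᶠ[nhds y] (⇑π ∘ A i) := by
        filter_upwards [hΩ.mem_nhds hy] with z hz
        simp [hπdef, Function.comp, hAspan i z k hk]
      have h0 : HasFDerivAt (fun _ : ℂ => (0 : ℂ)) (0 : ℂ →L[ℂ] ℂ) y := hasFDerivAt_const 0 y
      have := (hπ.congr_of_eventuallyEq hev).unique h0
      have h1 := congrArg (fun (L : ℂ →L[ℂ] ℂ) => L 1) this
      simpa only [ContinuousLinearMap.comp_apply, ContinuousLinearMap.proj_apply,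
        ContinuousLinearMap.zero_apply, hπdef, hwdef] using h1
    -- first component gives a = 0
    have ha : a = 0 := by
      have h1 := congrArg Prod.fst heq
      simp only [hv₀ p, hv, Prod.fst_add, Prod.smul_fst, smul_eq_mul, mul_one] at h1
      rw [Prod.fst_sum] at h1
      simp only [Prod.smul_fst, smul_eq_mul, mul_zero, Finset.sum_const_zero, add_zero] at h1
      exact h1.symm
    subst ha
    rw [zero_smul, zero_add] at heq
    -- second component at coordinate castLE j₀ gives c j₀ = 0
    have hc0 : ∀ j₀ : Fin h, c j₀ = 0 := by
      intro j₀
      have h2 := congrArg (fun q : ℂ × (Fin m → ℂ) => q.2 (Fin.castLE hm j₀)) heq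
      simp only at h2
      rw [Prod.snd_sum] at h2
      rw [Finset.sum_apply] at h2
      have hrw : ∀ j : Fin h,
          (c j • v j p).2 (Fin.castLE hm j₀) = if j₀ = j then c j else 0 := by
        intro j
        rw [hv j p]
        simp only [Prod.smul_snd, Pi.smul_apply, Pi.add_apply, smul_eq_mul]
        rw [hAspan j p.1 (Fin.castLE hm j₀) (by simp [j₀.isLt]), add_zero,
          Pi.single_apply]
        have : (Fin.castLE hm j₀ = Fin.castLE hm j) ↔ (j₀ = j) := Fin.castLE_inj
        by_cases hjj : j₀ = j <;> simp [hjj, this]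
      rw [Finset.sum_congr rfl fun j _ => hrw j] at h2
      rw [Finset.sum_ite_eq (Finset.univ) j₀ c] at h2
      simp only [Finset.mem_univ, if_true] at h2
      rw [hwk (Fin.castLE hm j₀) (by simp [j₀.isLt])] at h2
      exact h2.symm
    -- hence w = 0
    have hw0 : w = 0 := by
      have h2 := congrArg Prod.snd heq
      simp only [hc0, zero_smul, Finset.sum_const_zero] at h2
      simpa using h2
    exact ContinuousLinearMap.ext_ring (by simpa [hwdef] using hw0)
  intro i y₁ hy₁ y₂ hy₂
  have han : AnalyticOnNhd ℂ (A i) Ω := (hA i).analyticOnNhd hΩ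
  obtain ⟨ε, hε, hball⟩ := Metric.isOpen_iff.1 hΩ y₁ hy₁
  have hconst : ∀ z ∈ Metric.ball y₁ ε, A i z = A i y₁ := by
    intro z hz
    exact (convex_ball y₁ ε).is_const_of_fderivWithin_eq_zero
      ((hA i).mono hball)
      (fun x hx => by
        rw [fderivWithin_of_isOpen Metric.isOpen_ball hx]
        exact key i x (hball hx))
      hz (Metric.mem_ball_self hε)
  have hev : A i =ᶠ[nhds y₁] (fun _ => A i y₁) := by
    filter_upwards [Metric.ball_mem_nhds y₁ hε] with z hz using hconst z hz
  have := han.eqOn_of_preconnected_of_eventuallyEq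
    (analyticOnNhd_const) hconn.isPreconnected hy₁ hev
  rw [this hy₂]
end

section
/- Let $d, l$ be natural numbers, $\Omega \subseteq \mathbb{C}^d$ open, and let $s : \Omega \to \mathrm{Hom}_{\mathbb{C}}(\mathbb{C}^d, \mathbb{C}^l)$ be a holomorphic map into the space of linear maps. For a holomorphic map $u : \Omega \to \mathbb{C}^d$ define the vector field $V_u$ on $\Omega \times \mathbb{C}^l$ by $V_u(x,y) = (u(x), s(x)(u(x)))$. Then for any two holomorphic maps $u_1, u_2 : \Omega \to \mathbb{C}^d$ and every $(x,y) \in \Omega \times \mathbb{C}^l$, $[V_{u_1}, V_{u_2}](x,y) = \big(w,\; s(x)(w) + (Ds_x(u_1(x)))(u_2(x)) - (Ds_x(u_2(x)))(u_1(x))\big)$, where $w = [u_1, u_2](x) = D(u_2)_x(u_1(x)) - D(u_1)_x(u_2(x))$. -/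
lemma fderiv_Vfield {d l : ℕ} {Ω : Set (Fin d → ℂ)} (hΩ : IsOpen Ω)
    {s : (Fin d → ℂ) → ((Fin d → ℂ) →L[ℂ] (Fin l → ℂ))}
    (hs : DifferentiableOn ℂ s Ω)
    {u : (Fin d → ℂ) → (Fin d → ℂ)} (hu : DifferentiableOn ℂ u Ω)
    (p : (Fin d → ℂ) × (Fin l → ℂ)) (hp : p.1 ∈ Ω)
    (v : (Fin d → ℂ) × (Fin l → ℂ)) :
    fderiv ℂ (fun q : (Fin d → ℂ) × (Fin l → ℂ) => (u q.1, s q.1 (u q.1))) p v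
      = (fderiv ℂ u p.1 v.1,
         (fderiv ℂ s p.1 v.1) (u p.1) + s p.1 (fderiv ℂ u p.1 v.1)) := by
  have hu' : DifferentiableAt ℂ u p.1 := hu.differentiableAt (hΩ.mem_nhds hp)
  have hs' : DifferentiableAt ℂ s p.1 := hs.differentiableAt (hΩ.mem_nhds hp)
  have hsu : DifferentiableAt ℂ (fun x => s x (u x)) p.1 := hs'.clm_apply hu'
  have hg : DifferentiableAt ℂ (fun x => (u x, s x (u x))) p.1 := hu'.prodMk hsu
  have hcomp : (fun q : (Fin d → ℂ) × (Fin l → ℂ) => (u q.1, s q.1 (u q.1)))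
      = (fun x => (u x, s x (u x))) ∘ Prod.fst := rfl
  rw [hcomp, fderiv_comp p hg differentiableAt_fst, fderiv_fst]
  simp only [ContinuousLinearMap.coe_comp', Function.comp_apply,
    ContinuousLinearMap.coe_fst']
  rw [hu'.fderiv_prodMk hsu, fderiv_clm_apply hs' hu']
  simp
  abel_nf

/-- for a holomorphic map `s : Ω → Hom(ℂ^d, ℂ^l)` and holomorphic
`u₁, u₂ : Ω → ℂ^d`, the vector fields `V_u(x,y) = (u(x), s(x)(u(x)))` on `Ω × ℂ^l`
satisfy `[V_{u₁}, V_{u₂}](x,y) = (w, s(x)(w) + (Ds_x(u₁(x)))(u₂(x)) - (Ds_x(u₂(x)))(u₁(x)))`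
where `w = [u₁, u₂](x) = D(u₂)_x(u₁(x)) - D(u₁)_x(u₂(x))`. -/
theorem stmt3 (d l : ℕ) (Ω : Set (Fin d → ℂ)) (hΩ : IsOpen Ω)
    (s : (Fin d → ℂ) → ((Fin d → ℂ) →L[ℂ] (Fin l → ℂ)))
    (hs : DifferentiableOn ℂ s Ω)
    (u₁ u₂ : (Fin d → ℂ) → (Fin d → ℂ))
    (hu₁ : DifferentiableOn ℂ u₁ Ω) (hu₂ : DifferentiableOn ℂ u₂ Ω)
    (V : ((Fin d → ℂ) → (Fin d → ℂ)) →
      ((Fin d → ℂ) × (Fin l → ℂ)) → ((Fin d → ℂ) × (Fin l → ℂ)))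
    (hV : ∀ u p, V u p = (u p.1, s p.1 (u p.1))) :
    ∀ p : (Fin d → ℂ) × (Fin l → ℂ), p.1 ∈ Ω →
      lieBracket (V u₁) (V u₂) p =
        (fderiv ℂ u₂ p.1 (u₁ p.1) - fderiv ℂ u₁ p.1 (u₂ p.1),
          s p.1 (fderiv ℂ u₂ p.1 (u₁ p.1) - fderiv ℂ u₁ p.1 (u₂ p.1))
            + (fderiv ℂ s p.1 (u₁ p.1)) (u₂ p.1)
            - (fderiv ℂ s p.1 (u₂ p.1)) (u₁ p.1)) := by
  intro p hp
  have hV₁ : V u₁ = fun q : (Fin d → ℂ) × (Fin l → ℂ) => (u₁ q.1, s q.1 (u₁ q.1)) := funext (hV u₁)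
  have hV₂ : V u₂ = fun q : (Fin d → ℂ) × (Fin l → ℂ) => (u₂ q.1, s q.1 (u₂ q.1)) := funext (hV u₂)
  have e1 := fderiv_Vfield hΩ hs hu₂ p hp (V u₁ p)
  have e2 := fderiv_Vfield hΩ hs hu₁ p hp (V u₂ p)
  have h1 : (V u₁ p).1 = u₁ p.1 := by rw [hV u₁]
  have h2 : (V u₂ p).1 = u₂ p.1 := by rw [hV u₂]
  rw [lieBracket, hV₂, hV₁] at *
  rw [e1, e2, h1, h2, Prod.mk_sub_mk]
  refine Prod.ext rfl ?_
  simp only [map_sub]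
  abel
end
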